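/- Let K ⊆ ℝⁿ be invex with respect to η satisfying Condition C, f : K → (0,∞) log-preinvex with respect to η on the η-path P_{xv} for fixed x, y ∈ K, with φ(t) = f(x + t·η(y,x)) continuous and φ(a) ≠ φ(b). Then for every a, b ∈ (0,1) with a < b: |(1/(b-a)) ∫_a^b (∫_0^s f(x + t·η(y,x)) dt) ds − ∫_0^{(a+b)/2} f(x + s·η(y,x)) ds| ≤ (b-a)·[ (f(x + b·η(y,x))^{1/2} − f(x + a·η(y,x))^{1/2}) / (log f(x + b·η(y,x)) − log f(x + a·η(y,x))) ]². -/

import Mathlib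

open MeasureTheory intervalIntegral

theorem hh_several_variables_log_preinvex
    (n : ℕ) (K : Set (Fin n → ℝ)) (η : (Fin n → ℝ) → (Fin n → ℝ) → (Fin n → ℝ))
    (hinvex : ∀ u ∈ K, ∀ v ∈ K, ∀ t ∈ Set.Icc (0 : ℝ) 1, u + t • η v u ∈ K)
    (hC1 : ∀ u ∈ K, ∀ v ∈ K, ∀ t ∈ Set.Icc (0 : ℝ) 1,
      η v (v + t • η u v) = (-t) • η u v)
    (hC2 : ∀ u ∈ K, ∀ v ∈ K, ∀ t ∈ Set.Icc (0 : ℝ) 1,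
      η u (v + t • η u v) = (1 - t) • η u v)
    (f : (Fin n → ℝ) → ℝ) (hpos : ∀ u ∈ K, 0 < f u)
    (x y : Fin n → ℝ) (hx : x ∈ K) (hy : y ∈ K)
    (hlog : ∀ t₁ ∈ Set.Icc (0 : ℝ) 1, ∀ t₂ ∈ Set.Icc (0 : ℝ) 1,
      ∀ l ∈ Set.Icc (0 : ℝ) 1,
        f (x + ((1 - l) * t₁ + l * t₂) • η y x)
          ≤ f (x + t₁ • η y x) ^ (1 - l) * f (x + t₂ • η y x) ^ l)
    (hcont : ContinuousOn (fun t : ℝ => f (x + t • η y x)) (Set.Icc 0 1))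
    (a b : ℝ) (ha : a ∈ Set.Ioo (0 : ℝ) 1) (hb : b ∈ Set.Ioo (0 : ℝ) 1)
    (hab : a < b) (hne : f (x + a • η y x) ≠ f (x + b • η y x)) :
    |(1 / (b - a)) * (∫ s in a..b, ∫ t in (0 : ℝ)..s, f (x + t • η y x)) -
        ∫ s in (0 : ℝ)..((a + b) / 2), f (x + s • η y x)|
      ≤ (b - a) *
        ((f (x + b • η y x) ^ ((1 : ℝ) / 2) - f (x + a • η y x) ^ ((1 : ℝ) / 2)) /
          (Real.log (f (x + b • η y x)) - Real.log (f (x + a • η y x)))) ^ 2 := by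
  obtain ⟨ha0, ha1⟩ := ha
  obtain ⟨hb0, hb1⟩ := hb
  set φ : ℝ → ℝ := fun t => f (x + t • η y x) with hφdef
  have hφe : ∀ t : ℝ, f (x + t • η y x) = φ t := fun t => rfl
  simp only [hφe] at hne ⊢
  have hba : (0:ℝ) < b - a := by linarith
  have haI : a ∈ Set.Icc (0:ℝ) 1 := ⟨ha0.le, ha1.le⟩
  have hbI : b ∈ Set.Icc (0:ℝ) 1 := ⟨hb0.le, hb1.le⟩
  set m : ℝ := (a + b) / 2 with hm
  have hmI : m ∈ Set.Icc (0:ℝ) 1 := ⟨by simp only [hm]; linarith, by simp only [hm]; linarith⟩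
  have ham : a ≤ m := by simp only [hm]; linarith
  have hmb : m ≤ b := by simp only [hm]; linarith
  have hφpos : ∀ t ∈ Set.Icc (0:ℝ) 1, 0 < φ t := fun t ht =>
    hpos _ (hinvex x hx y hy t ht)
  set A : ℝ := φ a with hAdef
  set B : ℝ := φ b with hBdef
  have hA : 0 < A := hφpos a haI
  have hB : 0 < B := hφpos b hbI
  set D : ℝ := Real.log B - Real.log A with hDdef
  have hDne : D ≠ 0 := by
    intro h
    apply hne
    have hlog_eq : Real.log A = Real.log B := by
      have := sub_eq_zero.mp h; linarith
    calc A = Real.exp (Real.log A) := (Real.exp_log hA).symm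
      _ = Real.exp (Real.log B) := by rw [hlog_eq]
      _ = B := Real.exp_log hB
  set k : ℝ := D / (b - a) with hkdef
  have hkne : k ≠ 0 := div_ne_zero hDne hba.ne'
  -- integrability of φ on subintervals of [0,1]
  have hφint : ∀ c ∈ Set.Icc (0:ℝ) 1, ∀ d ∈ Set.Icc (0:ℝ) 1,
      IntervalIntegrable φ volume c d := fun c hc d hd =>
    (hcont.mono (Set.uIcc_subset_Icc hc hd)).intervalIntegrable
  -- the comparison exponential and its antiderivatives
  set g : ℝ → ℝ := fun t => A * Real.exp (k * (t - a)) with hgdef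
  set G : ℝ → ℝ := fun t => (A / k) * Real.exp (k * (t - a)) with hGdef
  set G2 : ℝ → ℝ := fun t => (A / k ^ 2) * Real.exp (k * (t - a)) with hG2def
  have hgpos : ∀ t : ℝ, 0 < g t := fun t => mul_pos hA (Real.exp_pos _)
  have hgcont : Continuous g := by fun_prop
  have hGcont : Continuous G := by fun_prop
  have hgint : ∀ c d : ℝ, IntervalIntegrable g volume c d := fun c d =>
    hgcont.intervalIntegrable c d
  have hG' : ∀ t : ℝ, HasDerivAt G (g t) t := by
    intro t
    have h1 : HasDerivAt (fun t : ℝ => k * (t - a)) k t := by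
      simpa using (((hasDerivAt_id t).sub_const a).const_mul k)
    have := (h1.exp).const_mul (A / k)
    convert this using 1
    show A * Real.exp (k * (t - a)) = A / k * (Real.exp (k * (t - a)) * k)
    rw [mul_comm (Real.exp _) k, ← mul_assoc, div_mul_cancel₀ A hkne]
    all_goals rfl
  have hG2' : ∀ t : ℝ, HasDerivAt G2 (G t) t := by
    intro t
    have h1 : HasDerivAt (fun t : ℝ => k * (t - a)) k t := by
      simpa using (((hasDerivAt_id t).sub_const a).const_mul k)
    have := (h1.exp).const_mul (A / k ^ 2)
    convert this using 1
    show A / k * Real.exp (k * (t - a)) = A / k ^ 2 * (Real.exp (k * (t - a)) * k)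
    rw [pow_two, ← div_div, mul_comm (Real.exp _) k, ← mul_assoc, div_mul_cancel₀ _ hkne]
    all_goals rfl
  have hFTCg : ∀ c d : ℝ, (∫ t in c..d, g t) = G d - G c := fun c d =>
    integral_eq_sub_of_hasDerivAt (fun t _ => hG' t) (hgint c d)
  have hFTCG : ∀ c d : ℝ, (∫ t in c..d, G t) = G2 d - G2 c := fun c d =>
    integral_eq_sub_of_hasDerivAt (fun t _ => hG2' t) (hGcont.intervalIntegrable c d)
  have hGmono : ∀ c d : ℝ, c ≤ d → G c ≤ G d := by
    intro c d hcd
    have h0 : 0 ≤ ∫ t in c..d, g t :=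
      intervalIntegral.integral_nonneg hcd (fun u _ => (hgpos u).le)
    rw [hFTCg] at h0
    linarith
  -- φ ≤ g on [a,b]
  have hφg : ∀ t ∈ Set.Icc a b, φ t ≤ g t := by
    intro t ht
    set l : ℝ := (t - a) / (b - a) with hldef
    have hl0 : 0 ≤ l := div_nonneg (by linarith [ht.1]) hba.le
    have hl1 : l ≤ 1 := (div_le_one hba).2 (by linarith [ht.2])
    have key := hlog a haI b hbI l ⟨hl0, hl1⟩
    have ht' : (1 - l) * a + l * b = t := by
      have hlm : l * (b - a) = t - a := by rw [hldef]; exact div_mul_cancel₀ _ hba.ne'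
      linear_combination hlm
    rw [ht'] at key
    have key' : φ t ≤ A ^ (1 - l) * B ^ l := key
    have h1 : A ^ (1 - l) = Real.exp (Real.log A * (1 - l)) :=
      Real.rpow_def_of_pos hA _
    have h2 : B ^ l = Real.exp (Real.log B * l) := Real.rpow_def_of_pos hB _
    have h3 : k * (t - a) = l * D := by
      rw [hldef, hkdef]; field_simp
    calc φ t ≤ A ^ (1 - l) * B ^ l := key'
      _ = g t := by
        rw [h1, h2, ← Real.exp_add, hgdef]
        simp only
        rw [h3, hDdef]
        rw [show Real.log A * (1 - l) + Real.log B * l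
            = Real.log A + l * (Real.log B - Real.log A) by ring]
        rw [Real.exp_add, Real.exp_log hA]
  -- the primitive h from the midpoint
  set h : ℝ → ℝ := fun s => ∫ t in m..s, φ t with hhdef
  have hconth : ContinuousOn h (Set.uIcc a b) :=
    intervalIntegral.continuousOn_primitive_interval' (hφint a haI b hbI)
      (by rw [Set.uIcc_of_le hab.le]; exact ⟨ham, hmb⟩)
  have hinth : IntervalIntegrable h volume a b := hconth.intervalIntegrable
  have hΦm : (∫ s in (0:ℝ)..m, φ s) = ∫ s in (0:ℝ)..m, φ s := rfl
  -- rewrite inner integral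
  have hsplit : (∫ s in a..b, ∫ t in (0:ℝ)..s, φ t)
      = (b - a) * (∫ t in (0:ℝ)..m, φ t) + ∫ s in a..b, h s := by
    have heq : Set.EqOn (fun s => ∫ t in (0:ℝ)..s, φ t)
        (fun s => (∫ t in (0:ℝ)..m, φ t) + h s) (Set.uIcc a b) := by
      intro s hs
      rw [Set.uIcc_of_le hab.le] at hs
      have hsI : s ∈ Set.Icc (0:ℝ) 1 := ⟨by linarith [hs.1], by linarith [hs.2]⟩
      simp only
      rw [hhdef]
      exact (intervalIntegral.integral_add_adjacent_intervals
        (hφint 0 ⟨le_refl 0, zero_le_one⟩ m hmI) (hφint m hmI s hsI)).symm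
    rw [intervalIntegral.integral_congr heq,
      intervalIntegral.integral_add intervalIntegrable_const hinth,
      intervalIntegral.integral_const, smul_eq_mul]
  -- pointwise bound |h s| ≤ |G s - G m|
  have hptw : ∀ s ∈ Set.Icc a b, |h s| ≤ |G s - G m| := by
    intro s hs
    have hsI : s ∈ Set.Icc (0:ℝ) 1 := ⟨by linarith [hs.1], by linarith [hs.2]⟩
    by_cases hsm : m ≤ s
    · have hsub : Set.Icc m s ⊆ Set.Icc a b := Set.Icc_subset_Icc ham hs.2
      have h0 : 0 ≤ h s :=
        intervalIntegral.integral_nonneg hsm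
          (fun u hu => (hφpos u ⟨by linarith [hu.1, hmI.1], by linarith [hu.2, hsI.2]⟩).le)
      have h1 : h s ≤ ∫ t in m..s, g t :=
        intervalIntegral.integral_mono_on hsm (hφint m hmI s hsI) (hgint m s)
          (fun t ht => hφg t (hsub ht))
      rw [hFTCg] at h1
      rw [abs_of_nonneg h0]
      exact h1.trans (le_abs_self _)
    · push_neg at hsm
      have hsub : Set.Icc s m ⊆ Set.Icc a b := Set.Icc_subset_Icc hs.1 hmb
      have hsym : h s = -(∫ t in s..m, φ t) := by
        rw [hhdef]; simp only; rw [intervalIntegral.integral_symm]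
      have h0 : 0 ≤ ∫ t in s..m, φ t :=
        intervalIntegral.integral_nonneg hsm.le
          (fun u hu => (hφpos u ⟨by linarith [hu.1, hsI.1], by linarith [hu.2, hmI.2]⟩).le)
      have h1 : (∫ t in s..m, φ t) ≤ ∫ t in s..m, g t :=
        intervalIntegral.integral_mono_on hsm.le (hφint s hsI m hmI) (hgint s m)
          (fun t ht => hφg t (hsub ht))
      rw [hFTCg] at h1
      rw [hsym, abs_neg, abs_of_nonneg h0]
      calc (∫ t in s..m, φ t) ≤ G m - G s := h1
        _ ≤ |G s - G m| := by rw [abs_sub_comm]; exact le_abs_self _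
  -- bound the middle integral
  have hintabs : IntervalIntegrable (fun s => |h s|) volume a b := hinth.abs
  have hintGG : IntervalIntegrable (fun s => |G s - G m|) volume a b :=
    (((hGcont.sub continuous_const).abs).intervalIntegrable a b)
  have hbound : |∫ s in a..b, h s| ≤ ∫ s in a..b, |G s - G m| := by
    calc |∫ s in a..b, h s| ≤ ∫ s in a..b, |h s| :=
          intervalIntegral.abs_integral_le_integral_abs hab.le
      _ ≤ ∫ s in a..b, |G s - G m| :=
          intervalIntegral.integral_mono_on hab.le hintabs hintGG hptw
  -- compute the majorant integral
  have hcompute : (∫ s in a..b, |G s - G m|) = G2 a + G2 b - 2 * G2 m := by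
    have hsplit2 : (∫ s in a..b, |G s - G m|)
        = (∫ s in a..m, |G s - G m|) + ∫ s in m..b, |G s - G m| :=
      (intervalIntegral.integral_add_adjacent_intervals
        (((hGcont.sub continuous_const).abs).intervalIntegrable a m)
        (((hGcont.sub continuous_const).abs).intervalIntegrable m b)).symm
    have h1 : (∫ s in a..m, |G s - G m|) = ∫ s in a..m, (G m - G s) := by
      apply intervalIntegral.integral_congr
      intro s hs
      rw [Set.uIcc_of_le ham] at hs
      simp only
      rw [abs_of_nonpos (by linarith [hGmono s m hs.2])]
      ring
    have h2 : (∫ s in m..b, |G s - G m|) = ∫ s in m..b, (G s - G m) := by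
      apply intervalIntegral.integral_congr
      intro s hs
      rw [Set.uIcc_of_le hmb] at hs
      simp only
      rw [abs_of_nonneg (by linarith [hGmono m s hs.1])]
    have h3 : (∫ s in a..m, (G m - G s)) = (m - a) * G m - (G2 m - G2 a) := by
      rw [intervalIntegral.integral_sub intervalIntegrable_const
        (hGcont.intervalIntegrable a m), intervalIntegral.integral_const,
        smul_eq_mul, hFTCG]
    have h4 : (∫ s in m..b, (G s - G m)) = (G2 b - G2 m) - (b - m) * G m := by
      rw [intervalIntegral.integral_sub (hGcont.intervalIntegrable m b)
        intervalIntegrable_const, intervalIntegral.integral_const,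
        smul_eq_mul, hFTCG]
    rw [hsplit2, h1, h2, h3, h4]
    have : m - a = b - m := by rw [hm]; ring
    rw [this]; ring
  -- put everything together
  have hmain : |(1 / (b - a)) * (∫ s in a..b, ∫ t in (0:ℝ)..s, φ t)
      - ∫ s in (0:ℝ)..m, φ s| ≤ (1 / (b - a)) * (G2 a + G2 b - 2 * G2 m) := by
    rw [hsplit]
    have : (1 / (b - a)) * ((b - a) * (∫ t in (0:ℝ)..m, φ t) + ∫ s in a..b, h s)
        - (∫ s in (0:ℝ)..m, φ s)
        = (1 / (b - a)) * (∫ s in a..b, h s) := by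
      field_simp
      ring
    rw [this, abs_mul, abs_of_pos (by positivity : (0:ℝ) < 1 / (b - a))]
    have := hbound.trans_eq hcompute
    have hpos' : (0:ℝ) < 1 / (b - a) := by positivity
    nlinarith [abs_nonneg (∫ s in a..b, h s)]
  refine hmain.trans ?_
  -- final algebra: (1/(b-a)) * (G2 a + G2 b - 2 G2 m) = RHS
  set sA : ℝ := Real.exp (Real.log A * (1 / 2)) with hsAdef
  set sB : ℝ := Real.exp (Real.log B * (1 / 2)) with hsBdef
  have hsA : 0 < sA := Real.exp_pos _
  have hsB : 0 < sB := Real.exp_pos _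
  have hsA2 : sA ^ 2 = A := by
    rw [pow_two, hsAdef, ← Real.exp_add,
      show Real.log A * (1 / 2) + Real.log A * (1 / 2) = Real.log A by ring,
      Real.exp_log hA]
  have hsB2 : sB ^ 2 = B := by
    rw [pow_two, hsBdef, ← Real.exp_add,
      show Real.log B * (1 / 2) + Real.log B * (1 / 2) = Real.log B by ring,
      Real.exp_log hB]
  have hrA : A ^ ((1:ℝ)/2) = sA := (Real.rpow_def_of_pos hA _)
  have hrB : B ^ ((1:ℝ)/2) = sB := (Real.rpow_def_of_pos hB _)
  have hG2a : G2 a = A / k ^ 2 := by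
    rw [hG2def]; simp
  have hG2b : G2 b = (A / k ^ 2) * (B / A) := by
    rw [hG2def]
    simp only
    have : k * (b - a) = D := by rw [hkdef]; field_simp
    rw [this, hDdef, Real.exp_sub, Real.exp_log hA, Real.exp_log hB]
  have hG2m : G2 m = (A / k ^ 2) * (sB / sA) := by
    rw [hG2def]
    simp only
    have h5 : k * (m - a) = D * (1/2) := by
      rw [hkdef, hm]; field_simp; ring
    rw [h5, hDdef]
    rw [show (Real.log B - Real.log A) * (1/2)
        = Real.log B * (1/2) - Real.log A * (1/2) by ring]
    rw [Real.exp_sub, hsAdef, hsBdef]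
  rw [hG2a, hG2b, hG2m, hrA, hrB]
  apply le_of_eq
  rw [hkdef, ← hsA2, ← hsB2]
  have h1 : sA ≠ 0 := hsA.ne'
  have h2 : sB ≠ 0 := hsB.ne'
  field_simp
  ring
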